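/- For every r-uniform hypergraph H with n vertices and m edges there exists an r-uniform hypergraph Ĥ with n vertices and m edges such that Δ(Ĥ) − δ(Ĥ) ≤ 1 and the symmetric difference of the edge sets E(H) and E(Ĥ) has size at most s(H) = Σ_i |d_H(i) − rm/n|. -/

import Mathlib

open Finset

variable {n : ℕ}

variable {n : ℕ}

def hdeg (E : Finset (Finset (Fin n))) (i : Fin n) : ℕ := (E.filter (fun e => i ∈ e)).card

lemma hdeg_sum (E : Finset (Finset (Fin n))) :
    ∑ i, hdeg E i = ∑ e ∈ E, e.card := by
  unfold hdeg
  simp only [card_filter]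
  rw [Finset.sum_comm]
  congr 1
  ext e
  rw [← card_filter]
  simp [Finset.filter_univ_mem]

lemma swap_exists (E : Finset (Finset (Fin n))) (u v : Fin n)
    (huv : hdeg E v < hdeg E u) :
    ∃ a ∈ E, u ∈ a ∧ v ∉ a ∧ insert v (a.erase u) ∉ E := by
  by_contra hcon
  push_neg at hcon
  have hne : u ≠ v := by rintro rfl; exact lt_irrefl _ huv
  set A := E.filter (fun a => u ∈ a ∧ v ∉ a) with hA
  set B := E.filter (fun a => v ∈ a ∧ u ∉ a) with hB
  have hmem : ∀ a ∈ A, u ∈ a ∧ v ∉ a ∧ a ∈ E := by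
    intro a ha; rw [hA, mem_filter] at ha; tauto
  have hvnotin : ∀ a ∈ A, v ∉ a.erase u := by
    intro a ha hv; exact (hmem a ha).2.1 (mem_of_mem_erase hv)
  have hmap : ∀ a ∈ A, insert v (a.erase u) ∈ B := by
    intro a ha
    obtain ⟨hu, hv, haE⟩ := hmem a ha
    rw [hB, mem_filter]
    refine ⟨hcon a haE hu hv, mem_insert_self _ _, ?_⟩
    intro hu'
    rcases mem_insert.1 hu' with h | h
    · exact hne h
    · exact notMem_erase u a h
  have hinj : Set.InjOn (fun a : Finset (Fin n) => insert v (a.erase u)) ↑A := by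
    intro a₁ h₁ a₂ h₂ heq
    simp only at heq
    have e₁ : (insert v (a₁.erase u)).erase v = a₁.erase u :=
      erase_insert (hvnotin a₁ h₁)
    have e₂ : (insert v (a₂.erase u)).erase v = a₂.erase u :=
      erase_insert (hvnotin a₂ h₂)
    have : a₁.erase u = a₂.erase u := by rw [← e₁, ← e₂, heq]
    have := congrArg (insert u) this
    rwa [insert_erase (hmem a₁ h₁).1, insert_erase (hmem a₂ h₂).1] at this
  have hAB : A.card ≤ B.card := card_le_card_of_injOn _ hmap hinj
  have hu : hdeg E u = (E.filter (fun a => u ∈ a ∧ v ∈ a)).card + A.card := by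
    unfold hdeg
    rw [hA, ← filter_filter, ← filter_filter,
      card_filter_add_card_filter_not (p := fun a => v ∈ a)]
  have hv : hdeg E v = (E.filter (fun a => u ∈ a ∧ v ∈ a)).card + B.card := by
    unfold hdeg
    have : E.filter (fun a => u ∈ a ∧ v ∈ a) = (E.filter (fun a => v ∈ a)).filter (fun a => u ∈ a) := by
      rw [filter_filter]; congr 1; ext a; tauto
    rw [this, hB, ← filter_filter,
      card_filter_add_card_filter_not (p := fun a => u ∈ a)]
  omega

lemma swap_step_aux (E : Finset (Finset (Fin n))) (r : ℕ) (hE : ∀ e ∈ E, e.card = r)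
    (u v : Fin n) (huv : hdeg E v < hdeg E u) (hne : u ≠ v)
    (a : Finset (Fin n)) (haE : a ∈ E) (hua : u ∈ a) (hva : v ∉ a)
    (hbE : insert v (a.erase u) ∉ E) :
    ∃ E' : Finset (Finset (Fin n)), (∀ e ∈ E', e.card = r) ∧ E'.card = E.card ∧
      hdeg E' u + 1 = hdeg E u ∧ hdeg E' v = hdeg E v + 1 ∧
      (∀ w, w ≠ u → w ≠ v → hdeg E' w = hdeg E w) ∧
      (E \ E') ∪ (E' \ E) ⊆ {a, insert v (a.erase u)} := by
  set b := insert v (a.erase u) with hb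
  have hvb : v ∈ b := mem_insert_self _ _
  have hub : u ∉ b := by
    intro h; rcases mem_insert.1 h with h | h
    · exact hne h
    · exact notMem_erase u a h
  have hvea : v ∉ a.erase u := fun h => hva (mem_of_mem_erase h)
  have hr : 1 ≤ r := by
    rw [← hE a haE]; exact card_pos.2 ⟨u, hua⟩
  have hcardb : b.card = r := by
    rw [hb, card_insert_of_notMem hvea, card_erase_of_mem hua, hE a haE]
    omega
  refine ⟨insert b (E.erase a), ?_, ?_, ?_, ?_, ?_, ?_⟩
  · intro e he
    rcases mem_insert.1 he with rfl | he
    · exact hcardb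
    · exact hE e (mem_of_mem_erase he)
  · rw [card_insert_of_notMem (fun h => hbE (mem_of_mem_erase h)),
      card_erase_of_mem haE]
    have : 1 ≤ E.card := card_pos.2 ⟨a, haE⟩
    omega
  · unfold hdeg
    rw [filter_insert, if_neg hub, filter_erase,
      card_erase_of_mem (mem_filter.2 ⟨haE, hua⟩)]
    have : 1 ≤ (E.filter (fun e => u ∈ e)).card := card_pos.2 ⟨a, mem_filter.2 ⟨haE, hua⟩⟩
    omega
  · unfold hdeg
    have h1 : a ∉ E.filter (fun e => v ∈ e) := fun h => hva (mem_filter.1 h).2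
    have h2 : b ∉ (E.filter (fun e => v ∈ e)).erase a :=
      fun h => hbE (mem_filter.1 (mem_of_mem_erase h)).1
    rw [filter_insert, if_pos hvb, filter_erase, card_insert_of_notMem h2,
      erase_eq_of_notMem h1]
  · intro w hwu hwv
    have hwab : w ∈ b ↔ w ∈ a := by
      rw [hb, mem_insert, mem_erase]; constructor
      · rintro (rfl | ⟨_, h⟩); exact absurd rfl hwv; exact h
      · intro h; exact Or.inr ⟨hwu, h⟩
    unfold hdeg
    rw [filter_insert, filter_erase]
    by_cases hwa : w ∈ a
    · have h2 : b ∉ (E.filter (fun e => w ∈ e)).erase a :=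
        fun h => hbE (mem_filter.1 (mem_of_mem_erase h)).1
      rw [if_pos (hwab.2 hwa), card_insert_of_notMem h2,
        card_erase_of_mem (mem_filter.2 ⟨haE, hwa⟩)]
      have : 1 ≤ (E.filter (fun e => w ∈ e)).card := card_pos.2 ⟨a, mem_filter.2 ⟨haE, hwa⟩⟩
      omega
    · have h1 : a ∉ E.filter (fun e => w ∈ e) := fun h => hwa (mem_filter.1 h).2
      rw [if_neg (fun h => hwa (hwab.1 h)), erase_eq_of_notMem h1]
  · intro x hx
    rcases mem_union.1 hx with hx | hx
    · rcases mem_sdiff.1 hx with ⟨hxE, hxE'⟩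
      have h3 : x ∉ E.erase a := fun h => hxE' (mem_insert_of_mem h)
      rw [mem_erase] at h3
      push_neg at h3
      have : x = a := by by_contra hne'; exact (h3 hne') hxE
      simp [this]
    · rcases mem_sdiff.1 hx with ⟨hxE', hxE⟩
      rcases mem_insert.1 hxE' with rfl | h
      · simp
      · exact absurd (mem_of_mem_erase h) hxE

lemma swap_step (E : Finset (Finset (Fin n))) (r : ℕ) (hE : ∀ e ∈ E, e.card = r)
    (u v : Fin n) (huv : hdeg E v < hdeg E u) :
    ∃ E' : Finset (Finset (Fin n)), (∀ e ∈ E', e.card = r) ∧ E'.card = E.card ∧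
      hdeg E' u + 1 = hdeg E u ∧ hdeg E' v = hdeg E v + 1 ∧
      (∀ w, w ≠ u → w ≠ v → hdeg E' w = hdeg E w) ∧
      ((E \ E') ∪ (E' \ E)).card ≤ 2 := by
  have hne : u ≠ v := by rintro rfl; exact lt_irrefl _ huv
  obtain ⟨a, haE, hua, hva, hbE⟩ := swap_exists E u v huv
  obtain ⟨E', h1, h2, h3, h4, h5, h6⟩ := swap_step_aux E r hE u v huv hne a haE hua hva hbE
  refine ⟨E', h1, h2, h3, h4, h5, ?_⟩
  calc ((E \ E') ∪ (E' \ E)).card ≤ ({a, insert v (a.erase u)} : Finset (Finset (Fin n))).card :=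
        card_le_card h6
    _ ≤ 2 := card_insert_le _ _ |>.trans (by simp)

lemma key (r : ℕ) (tgt : Fin n → ℕ) (htgt : ∀ i j, tgt i ≤ tgt j + 1) :
    ∀ M : ℕ, ∀ E : Finset (Finset (Fin n)), (∀ e ∈ E, e.card = r) →
      (∑ i, tgt i = r * E.card) →
      (∑ i, ((hdeg E i : ℤ) - tgt i).natAbs = M) →
      ∃ F : Finset (Finset (Fin n)), (∀ e ∈ F, e.card = r) ∧ F.card = E.card ∧
        (∀ i, hdeg F i = tgt i) ∧ ((E \ F) ∪ (F \ E)).card ≤ M := by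
  intro M
  induction M using Nat.strong_induction_on with
  | _ M ih =>
    intro E hE hsum hM
    by_cases hd : ∀ i, hdeg E i = tgt i
    · exact ⟨E, hE, rfl, hd, by simp⟩
    · push_neg at hd
      obtain ⟨i₀, hi₀⟩ := hd
      have h1 : ∑ i, (hdeg E i : ℤ) = (r : ℤ) * E.card := by
        have := hdeg_sum E
        have h2 : ∑ e ∈ E, e.card = r * E.card := by
          rw [Finset.sum_congr rfl hE, Finset.sum_const, smul_eq_mul, mul_comm]
        exact_mod_cast this.trans h2
      have h3 : ∑ i, (tgt i : ℤ) = (r : ℤ) * E.card := by exact_mod_cast hsum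
      have hz : ∑ i, ((hdeg E i : ℤ) - tgt i) = 0 := by
        rw [Finset.sum_sub_distrib, h1, h3]; ring
      have hu : ∃ u, (tgt u : ℤ) < hdeg E u := by
        by_contra hcon
        push_neg at hcon
        have hlt : ∑ i, ((hdeg E i : ℤ) - tgt i) < ∑ _i : Fin n, (0 : ℤ) := by
          apply Finset.sum_lt_sum
          · intro i _; have := hcon i; omega
          · exact ⟨i₀, mem_univ i₀, by have := hcon i₀; have := hi₀; omega⟩
        rw [Finset.sum_sub_distrib, h1, h3] at hlt; simp at hlt
      have hv : ∃ v, (hdeg E v : ℤ) < tgt v := by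
        by_contra hcon
        push_neg at hcon
        have hlt : ∑ _i : Fin n, (0 : ℤ) < ∑ i, ((hdeg E i : ℤ) - tgt i) := by
          apply Finset.sum_lt_sum
          · intro i _; have := hcon i; omega
          · exact ⟨i₀, mem_univ i₀, by have := hcon i₀; have := hi₀; omega⟩
        rw [Finset.sum_sub_distrib, h1, h3] at hlt; simp at hlt
      obtain ⟨u, hu⟩ := hu
      obtain ⟨v, hv⟩ := hv
      have huv : hdeg E v < hdeg E u := by
        have h1 := htgt v u
        omega
      obtain ⟨E', hE', hcard', hdu, hdv, hdw, hsym⟩ := swap_step E r hE u v huv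
      have hne : u ≠ v := by intro h; rw [h] at hu; omega
      -- new measure
      have hM' : ∑ i, ((hdeg E' i : ℤ) - tgt i).natAbs + 2 = M := by
        rw [← hM]
        have hterm : ∀ i, ((hdeg E' i : ℤ) - tgt i).natAbs
            + ((if i = u then 1 else 0) + (if i = v then 1 else 0))
            = ((hdeg E i : ℤ) - tgt i).natAbs := by
          intro i
          by_cases h1 : i = u
          · subst h1; simp [hne]; omega
          · by_cases h2 : i = v
            · subst h2; simp [h1]; omega
            · rw [hdw i h1 h2]; simp [h1, h2]
        rw [← Finset.sum_congr rfl (fun i _ => hterm i), Finset.sum_add_distrib,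
          Finset.sum_add_distrib]
        simp [Finset.sum_ite_eq']
      have hlt2 : ∑ i, ((hdeg E' i : ℤ) - tgt i).natAbs < M := by omega
      obtain ⟨F, hF, hFcard, hFdeg, hFsym⟩ := ih _ hlt2 E' hE' (by rw [hcard']; exact hsum) rfl
      refine ⟨F, hF, hFcard.trans hcard', hFdeg, ?_⟩
      have hsub : (E \ F) ∪ (F \ E) ⊆ ((E \ E') ∪ (E' \ E)) ∪ ((E' \ F) ∪ (F \ E')) := by
        intro x hx
        simp only [mem_union, mem_sdiff] at hx ⊢
        by_cases hx' : x ∈ E' <;> tauto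
      calc ((E \ F) ∪ (F \ E)).card ≤ (((E \ E') ∪ (E' \ E)) ∪ ((E' \ F) ∪ (F \ E'))).card :=
            card_le_card hsub
        _ ≤ ((E \ E') ∪ (E' \ E)).card + ((E' \ F) ∪ (F \ E')).card := card_union_le _ _
        _ ≤ M := by omega

lemma target_exists (r m : ℕ) (hn : 0 < n) (d : Fin n → ℕ) :
    ∃ tgt : Fin n → ℕ, (∑ i, tgt i = r * m) ∧ (∀ i j, tgt i ≤ tgt j + 1) ∧
      (∑ i, |((d i : ℝ)) - tgt i| ≤ ∑ i, |((d i : ℝ)) - (r * m : ℕ) / n|) := by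
  set q := r * m / n with hq
  set ρ := r * m % n with hρ
  have hdm : n * q + ρ = r * m := Nat.div_add_mod _ _
  have hρn : ρ < n := Nat.mod_lt _ hn
  -- choose S of card ρ maximizing the degree sum
  have hTne : ((univ : Finset (Fin n)).powerset.filter (fun S => S.card = ρ)).Nonempty := by
    obtain ⟨S, hSsub, hScard⟩ := Finset.exists_subset_card_eq (s := (univ : Finset (Fin n))) (n := ρ)
      (by simp; omega)
    exact ⟨S, by simp [hScard]⟩
  obtain ⟨S, hSmem, hSmax⟩ := Finset.exists_max_image _ (fun S => ∑ i ∈ S, d i) hTne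
  have hScard : S.card = ρ := (mem_filter.1 hSmem).2
  -- exchange property
  have hopt : (∀ i ∈ S, q + 1 ≤ d i) ∨ (∀ j, j ∉ S → d j ≤ q) := by
    by_contra hcon
    push_neg at hcon
    obtain ⟨⟨i, hiS, hdi⟩, j, hjS, hdj⟩ := hcon
    have hij : j ≠ i := fun h => hjS (h ▸ hiS)
    set S' := insert j (S.erase i) with hS'
    have hjS' : j ∉ S.erase i := fun h => hjS (mem_of_mem_erase h)
    have hS'mem : S' ∈ (univ : Finset (Fin n)).powerset.filter (fun S => S.card = ρ) := by
      rw [mem_filter]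
      refine ⟨by simp, ?_⟩
      rw [hS', card_insert_of_notMem hjS', card_erase_of_mem hiS, hScard]
      have : 1 ≤ ρ := by rw [← hScard]; exact card_pos.2 ⟨i, hiS⟩
      omega
    have hsum' : ∑ k ∈ S', d k = ∑ k ∈ S.erase i, d k + d j := by
      rw [hS', sum_insert hjS']; ring
    have hsumS : ∑ k ∈ S, d k = ∑ k ∈ S.erase i, d k + d i := by
      rw [add_comm, Finset.add_sum_erase _ _ hiS]
    have := hSmax S' hS'mem
    have hlt : d i < q + 1 := by omega
    omega
  refine ⟨fun i => if i ∈ S then q + 1 else q, ?_, ?_, ?_⟩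
  · rw [← Finset.sum_add_sum_compl S]
    have e1 : ∑ i ∈ S, (if i ∈ S then q + 1 else q) = ρ * (q + 1) := by
      rw [Finset.sum_congr rfl (fun i hi => if_pos hi), Finset.sum_const, hScard, smul_eq_mul]
    have e2 : ∑ i ∈ Sᶜ, (if i ∈ S then q + 1 else q) = (n - ρ) * q := by
      rw [Finset.sum_congr rfl (fun i (hi : i ∈ Sᶜ) => if_neg (mem_compl.1 hi)),
        Finset.sum_const, card_compl, hScard, Fintype.card_fin, smul_eq_mul]
    rw [e1, e2]
    have hdm' : (n : ℤ) * q + ρ = r * m := by exact_mod_cast hdm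
    zify [hρn.le]
    linear_combination hdm'
  · intro i j
    show (if i ∈ S then q + 1 else q) ≤ (if j ∈ S then q + 1 else q) + 1
    split_ifs <;> omega
  · -- real inequality
    set t : ℝ := (r * m : ℕ) / n with ht
    have hn' : (0 : ℝ) < n := by exact_mod_cast hn
    have htq : t = q + (ρ : ℝ) / n := by
      rw [ht, ← hdm]
      push_cast
      field_simp
    set θ : ℝ := (ρ : ℝ) / n with hθ
    have hθ0 : 0 ≤ θ := by positivity
    have hθ1 : θ < 1 := by
      rw [hθ, div_lt_one hn']; exact_mod_cast hρn
    have hnθ : (n : ℝ) * θ = ρ := by rw [hθ]; field_simp [hn'.ne']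
    rw [← Finset.sum_add_sum_compl S, ← Finset.sum_add_sum_compl S (f := fun i => |((d i : ℝ)) - t|)]
    rcases hopt with hca | hcb
    · have hA : ∑ i ∈ S, |((d i : ℝ)) - ((if i ∈ S then q + 1 else q : ℕ) : ℝ)|
          = ∑ i ∈ S, (|((d i : ℝ)) - t| - (1 - θ)) := by
        apply Finset.sum_congr rfl
        intro i hi
        rw [if_pos hi]
        have h1 : (q : ℝ) + 1 ≤ d i := by exact_mod_cast hca i hi
        have h2 : t < (q : ℝ) + 1 := by rw [htq]; linarith
        rw [abs_of_nonneg (by push_cast; linarith), abs_of_nonneg (by push_cast; linarith)]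
        push_cast
        rw [htq]; ring
      have hB : ∀ i ∈ Sᶜ, |((d i : ℝ)) - ((if i ∈ S then q + 1 else q : ℕ) : ℝ)|
          ≤ |((d i : ℝ)) - t| + θ := by
        intro i hi
        rw [if_neg (mem_compl.1 hi)]
        have h7 : ((d i : ℝ)) - q = (((d i : ℝ)) - t) + θ := by rw [htq]; ring
        rw [h7]
        calc |(((d i : ℝ)) - t) + θ| ≤ |((d i : ℝ)) - t| + |θ| := abs_add_le _ _
          _ = |((d i : ℝ)) - t| + θ := by rw [abs_of_nonneg hθ0]
      have hBs := Finset.sum_le_sum hB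
      have hcards : (Sᶜ : Finset (Fin n)).card = n - ρ := by
        rw [card_compl, hScard, Fintype.card_fin]
      have h5 : ∑ _i ∈ S, ((1 : ℝ) - θ) = (ρ : ℝ) * (1 - θ) := by
        rw [Finset.sum_const, hScard, nsmul_eq_mul]
      have h6 : ∑ i ∈ Sᶜ, (|((d i : ℝ)) - t| + θ)
          = ∑ i ∈ Sᶜ, |((d i : ℝ)) - t| + ((n : ℝ) - ρ) * θ := by
        rw [Finset.sum_add_distrib, Finset.sum_const, hcards, nsmul_eq_mul,
          Nat.cast_sub hρn.le]
      rw [h6] at hBs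
      rw [hA, Finset.sum_sub_distrib, h5]
      linarith [hnθ, hBs]
    · have hA : ∑ i ∈ Sᶜ, |((d i : ℝ)) - ((if i ∈ S then q + 1 else q : ℕ) : ℝ)|
          = ∑ i ∈ Sᶜ, (|((d i : ℝ)) - t| - θ) := by
        apply Finset.sum_congr rfl
        intro i hi
        rw [if_neg (mem_compl.1 hi)]
        have h1 : (d i : ℝ) ≤ q := by exact_mod_cast hcb i (mem_compl.1 hi)
        have h2 : (q : ℝ) ≤ t := by rw [htq]; linarith
        rw [abs_of_nonpos (by push_cast; linarith), abs_of_nonpos (by push_cast; linarith)]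
        push_cast
        rw [htq]; ring
      have hB : ∀ i ∈ S, |((d i : ℝ)) - ((if i ∈ S then q + 1 else q : ℕ) : ℝ)|
          ≤ |((d i : ℝ)) - t| + (1 - θ) := by
        intro i hi
        rw [if_pos hi]
        have h7 : ((d i : ℝ)) - ((q : ℕ) + 1 : ℕ) = (((d i : ℝ)) - t) - (1 - θ) := by
          push_cast; rw [htq]; ring
        push_cast
        have h7' : ((d i : ℝ)) - ((q : ℝ) + 1) = (((d i : ℝ)) - t) - (1 - θ) := by
          rw [htq]; ring
        rw [h7', sub_eq_add_neg]
        calc |(((d i : ℝ)) - t) + -(1 - θ)| ≤ |((d i : ℝ)) - t| + |-(1 - θ)| := abs_add_le _ _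
          _ = |((d i : ℝ)) - t| + (1 - θ) := by
              rw [abs_neg, abs_of_nonneg (by linarith : (0:ℝ) ≤ 1 - θ)]
      have hBs := Finset.sum_le_sum hB
      have hcards : (Sᶜ : Finset (Fin n)).card = n - ρ := by
        rw [card_compl, hScard, Fintype.card_fin]
      have h5 : ∑ _i ∈ (Sᶜ : Finset (Fin n)), θ = ((n : ℝ) - ρ) * θ := by
        rw [Finset.sum_const, hcards, nsmul_eq_mul, Nat.cast_sub hρn.le]
      have h6 : ∑ i ∈ S, (|((d i : ℝ)) - t| + (1 - θ))
          = ∑ i ∈ S, |((d i : ℝ)) - t| + (ρ : ℝ) * (1 - θ) := by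
        rw [Finset.sum_add_distrib, Finset.sum_const, hScard, nsmul_eq_mul]
      rw [h6] at hBs
      rw [hA, Finset.sum_sub_distrib, h5]
      linarith [hnθ, hBs]

/-- Every `r`-uniform hypergraph with `n` vertices and `m` edges can be changed,
in at most `s(H)` edges, into one whose maximum and minimum degrees differ by at
most `1`. -/
theorem stmt_8 (r n m : ℕ) (hn : 0 < n) (E : Finset (Finset (Fin n)))
    (hE : ∀ e ∈ E, e.card = r) (hm : E.card = m) :
    ∃ F : Finset (Finset (Fin n)), (∀ e ∈ F, e.card = r) ∧ F.card = m ∧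
      (∀ i j : Fin n,
        (F.filter (fun e => i ∈ e)).card ≤ (F.filter (fun e => j ∈ e)).card + 1) ∧
      ((((E \ F) ∪ (F \ E)).card : ℝ) ≤
        ∑ i, |((E.filter (fun e => i ∈ e)).card : ℝ) - (r : ℝ) * m / n|) := by
  obtain ⟨tgt, htsum, htgt, htreal⟩ := target_exists r m hn (hdeg E)
  obtain ⟨F, hF, hFcard, hFdeg, hFsym⟩ := key r tgt htgt
    (∑ i, ((hdeg E i : ℤ) - tgt i).natAbs) E hE (by rw [hm]; exact htsum) rfl
  refine ⟨F, hF, hFcard.trans hm, ?_, ?_⟩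
  · intro i j
    show hdeg F i ≤ hdeg F j + 1
    rw [hFdeg i, hFdeg j]
    exact htgt i j
  · have hcast : ((∑ i, ((hdeg E i : ℤ) - tgt i).natAbs : ℕ) : ℝ)
        = ∑ i, |((hdeg E i : ℝ)) - tgt i| := by
      push_cast
      apply Finset.sum_congr rfl
      intro i _
      rw [Nat.cast_natAbs, Int.cast_abs]
      push_cast
      rfl
    have h1 : ((((E \ F) ∪ (F \ E)).card : ℕ) : ℝ)
        ≤ ((∑ i, ((hdeg E i : ℤ) - tgt i).natAbs : ℕ) : ℝ) := by
      exact_mod_cast hFsym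
    have h2 : ∑ i, |((hdeg E i : ℝ)) - ((r * m : ℕ) : ℝ) / n|
        = ∑ i, |((E.filter (fun e => i ∈ e)).card : ℝ) - (r : ℝ) * m / n| := by
      apply Finset.sum_congr rfl
      intro i _
      push_cast
      rfl
    calc ((((E \ F) ∪ (F \ E)).card : ℕ) : ℝ) ≤ _ := h1
      _ = ∑ i, |((hdeg E i : ℝ)) - tgt i| := hcast
      _ ≤ ∑ i, |((hdeg E i : ℝ)) - ((r * m : ℕ) : ℝ) / n| := htreal
      _ = _ := h2
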